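/- Let B = e^{-iκx̂₁} g(x̂₂) act on L²(ℝ²) = L²(ℝ) ⊗ L²(ℝ), where g is a bounded real-valued function of the second coordinate. Then for the dissipator 𝓛_B[ρ] = BρB† − ½{B†B, ρ}: (i) Tr(x̂₂ 𝓛_B[ρ]) = 0 and Tr(p̂₂ 𝓛_B[ρ]) = 0 for all density operators ρ (the target's first moments are unaffected); (ii) Tr(p̂₁ 𝓛_B[ρ]) = −ℏκ Tr(g(x̂₂)² ρ) (the controller feels a statistical force). -/

import Mathlib

/- STATEMENT 16: Let B = e^{-iκx̂₁} g(x̂₂) on L²(ℝ²), g bounded real.  Then for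
   𝓛_B[ρ] = BρB† − ½{B†B, ρ}, in Heisenberg form 𝓛ᵀ_B[h] = B†hB − ½{B†B, h}:
   (i) 𝓛ᵀ_B[x̂₂] = 0 and 𝓛ᵀ_B[p̂₂] = 0 (target's first moments unaffected:
       Tr(x̂₂𝓛_B[ρ]) = Tr(p̂₂𝓛_B[ρ]) = 0 for every density operator ρ);
   (ii) 𝓛ᵀ_B[p̂₁] = −ℏκ g(x̂₂)² (the controller feels a statistical force).
   Position representation: x̂ᵢ multiplication, p̂ᵢ = −iℏ∂ᵢ. -/

noncomputable section

lemma hasDerivAt_ofRealC (x : ℝ) : HasDerivAt (fun t : ℝ => (t : ℂ)) 1 x := by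
  simpa using (hasDerivAt_id x).ofReal_comp

lemma hasDerivAt_cexp_mul (c : ℂ) (x : ℝ) :
    HasDerivAt (fun t : ℝ => Complex.exp (c * t)) (Complex.exp (c * x) * c) x := by
  have h : HasDerivAt (fun t : ℝ => c * (t : ℂ)) c x := by
    simpa using (hasDerivAt_ofRealC x).const_mul c
  simpa using h.cexp

/-- B = e^{-iκx̂₁} g(x̂₂), acting on two-particle wavefunctions. -/
def jumpB (κ : ℝ) (g : ℝ → ℝ) (ψ : ℝ → ℝ → ℂ) : ℝ → ℝ → ℂ :=
  fun x y => Complex.exp (-Complex.I * κ * x) * (g y : ℂ) * ψ x y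

/-- B†. -/
def jumpBdag (κ : ℝ) (g : ℝ → ℝ) (ψ : ℝ → ℝ → ℂ) : ℝ → ℝ → ℂ :=
  fun x y => Complex.exp (Complex.I * κ * x) * (g y : ℂ) * ψ x y

/-- x̂₂: multiplication by the second coordinate. -/
def posOp2 (ψ : ℝ → ℝ → ℂ) : ℝ → ℝ → ℂ := fun x y => (y : ℂ) * ψ x y

/-- p̂₁ = −iℏ ∂/∂x₁. -/
def momOp1 (ℏ : ℝ) (ψ : ℝ → ℝ → ℂ) : ℝ → ℝ → ℂ :=
  fun x y => -Complex.I * ℏ * deriv (fun t => ψ t y) x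

/-- p̂₂ = −iℏ ∂/∂x₂. -/
def momOp2 (ℏ : ℝ) (ψ : ℝ → ℝ → ℂ) : ℝ → ℝ → ℂ :=
  fun x y => -Complex.I * ℏ * deriv (fun t => ψ x t) y

/-- Heisenberg form 𝓛ᵀ_B[h] = B†hB − ½{B†B, h}. -/
def lindbladTB (κ : ℝ) (g : ℝ → ℝ) (h : (ℝ → ℝ → ℂ) → (ℝ → ℝ → ℂ)) :
    (ℝ → ℝ → ℂ) → (ℝ → ℝ → ℂ) :=
  fun ψ =>
    jumpBdag κ g (h (jumpB κ g ψ))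
      - (1/2 : ℂ) • (jumpBdag κ g (jumpB κ g (h ψ)) + h (jumpBdag κ g (jumpB κ g ψ)))

theorem nonreciprocal_coupling (ℏ κ : ℝ) (hℏ : 0 < ℏ) (g : ℝ → ℝ)
    (hg : Differentiable ℝ g) (hgb : ∃ M : ℝ, ∀ y, |g y| ≤ M) :
    ∀ ψ : ℝ → ℝ → ℂ,
      (∀ y, Differentiable ℝ (fun x => ψ x y)) →
      (∀ x, Differentiable ℝ (fun y => ψ x y)) →
      ∀ x y : ℝ,
        -- (i) the target's first moments are unaffected:
        lindbladTB κ g posOp2 ψ x y = 0 ∧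
        lindbladTB κ g (momOp2 ℏ) ψ x y = 0 ∧
        -- (ii) the controller feels the statistical force −ℏκ g(x̂₂)²:
        lindbladTB κ g (momOp1 ℏ) ψ x y = ((-(ℏ * κ) * (g y) ^ 2 : ℝ) : ℂ) * ψ x y := by
  intro ψ hψ1 hψ2 x y
  have hgC : HasDerivAt (fun t : ℝ => ((g t : ℂ))) ((deriv g y : ℝ) : ℂ) y :=
    ((hg y).hasDerivAt).ofReal_comp
  have hψy : HasDerivAt (fun t => ψ x t) (deriv (fun t => ψ x t) y) y :=
    ((hψ2 x) y).hasDerivAt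
  have hψx : HasDerivAt (fun t => ψ t y) (deriv (fun t => ψ t y) x) x :=
    ((hψ1 y) x).hasDerivAt
  have hE : Complex.exp (Complex.I * κ * x) * Complex.exp (-Complex.I * κ * x) = 1 := by
    rw [← Complex.exp_add]
    have h0 : Complex.I * κ * x + -Complex.I * κ * x = 0 := by ring
    rw [h0, Complex.exp_zero]
  have hI : Complex.I * Complex.I = -1 := Complex.I_mul_I
  refine ⟨?_, ?_, ?_⟩
  · -- (i) x̂₂
    simp only [lindbladTB, jumpB, jumpBdag, posOp2, Pi.sub_apply, Pi.smul_apply,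
      Pi.add_apply, smul_eq_mul]
    ring
  · -- (i) p̂₂
    have hdA : deriv (fun t => Complex.exp (-Complex.I * κ * x) * (g t : ℂ) * ψ x t) y
        = Complex.exp (-Complex.I * κ * x) *
            (((deriv g y : ℝ) : ℂ) * ψ x y + (g y : ℂ) * deriv (fun t => ψ x t) y) := by
      have hf : (fun t => Complex.exp (-Complex.I * κ * x) * (g t : ℂ) * ψ x t)
          = fun t => Complex.exp (-Complex.I * κ * x) * ((g t : ℂ) * ψ x t) := by
        funext t; ring
      rw [hf]
      exact ((hgC.mul hψy).const_mul _).deriv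
    have hdB : deriv (fun t => Complex.exp (Complex.I * κ * x) * (g t : ℂ) *
          (Complex.exp (-Complex.I * κ * x) * (g t : ℂ) * ψ x t)) y
        = (Complex.exp (Complex.I * κ * x) * Complex.exp (-Complex.I * κ * x)) *
            (((deriv g y : ℝ) : ℂ) * ((g y : ℂ) * ψ x y) +
              (g y : ℂ) * (((deriv g y : ℝ) : ℂ) * ψ x y + (g y : ℂ) * deriv (fun t => ψ x t) y)) := by
      have hf : (fun t => Complex.exp (Complex.I * κ * x) * (g t : ℂ) *
            (Complex.exp (-Complex.I * κ * x) * (g t : ℂ) * ψ x t))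
          = fun t => (Complex.exp (Complex.I * κ * x) * Complex.exp (-Complex.I * κ * x)) *
              ((g t : ℂ) * ((g t : ℂ) * ψ x t)) := by
        funext t; ring
      rw [hf]
      exact ((hgC.mul (hgC.mul hψy)).const_mul _).deriv
    simp only [lindbladTB, jumpB, jumpBdag, momOp2, Pi.sub_apply, Pi.smul_apply,
      Pi.add_apply, smul_eq_mul]
    rw [hdA, hdB]
    ring
  · -- (ii) p̂₁
    have hdC : deriv (fun t : ℝ => Complex.exp (-Complex.I * κ * t) * (g y : ℂ) * ψ t y) x
        = (Complex.exp (-Complex.I * κ * x) * (-Complex.I * κ) * (g y : ℂ)) * ψ x y +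
            (Complex.exp (-Complex.I * κ * x) * (g y : ℂ)) * deriv (fun t => ψ t y) x :=
      (((hasDerivAt_cexp_mul (-Complex.I * κ) x).mul_const ((g y : ℂ))).mul hψx).deriv
    have hdD : deriv (fun t : ℝ => Complex.exp (Complex.I * κ * t) * (g y : ℂ) *
          (Complex.exp (-Complex.I * κ * t) * (g y : ℂ) * ψ t y)) x
        = (Complex.exp (Complex.I * κ * x) * (Complex.I * κ) * (g y : ℂ)) *
            (Complex.exp (-Complex.I * κ * x) * (g y : ℂ) * ψ x y) +
          (Complex.exp (Complex.I * κ * x) * (g y : ℂ)) *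
            ((Complex.exp (-Complex.I * κ * x) * (-Complex.I * κ) * (g y : ℂ)) * ψ x y +
              (Complex.exp (-Complex.I * κ * x) * (g y : ℂ)) * deriv (fun t => ψ t y) x) :=
      (((hasDerivAt_cexp_mul (Complex.I * κ) x).mul_const ((g y : ℂ))).mul
        ((((hasDerivAt_cexp_mul (-Complex.I * κ) x).mul_const ((g y : ℂ))).mul hψx))).deriv
    simp only [lindbladTB, jumpB, jumpBdag, momOp1, Pi.sub_apply, Pi.smul_apply,
      Pi.add_apply, smul_eq_mul]
    rw [hdC, hdD]
    push_cast
    linear_combination ((ℏ : ℂ) * κ * (g y : ℂ)^2 * ψ x y *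
        Complex.exp (Complex.I * κ * x) * Complex.exp (-Complex.I * κ * x)) * hI +
      (-(ℏ : ℂ) * κ * (g y : ℂ)^2 * ψ x y) * hE

end
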